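/- Let G be a weighted undirected graph partitioned into G_1, ..., G_k, and suppose s ∈ G_i is a boundary vertex and t ∈ G_j (i ≠ j) is a non-boundary (inner) vertex. Let b be the last boundary vertex on a shortest path p from s to t. Then b ∈ B_j, the subpath of p from b to t lies entirely in G_j, and d_G(s, t) = d_G(s, b) + d_{G_j}(b, t). -/

import Mathlib

open scoped ENNReal Classical

namespace PSP

/-- A weighted undirected graph: symmetric adjacency and a weight function
with values in `ℝ≥0∞` (so weights are non-negative). -/
structure WGraph (V : Type*) where
  Adj : V → V → Prop
  symm : ∀ {u v}, Adj u v → Adj v u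
  w : V → V → ℝ≥0∞

variable {V : Type*} {ι : Type*}

/-- Sum of `f` over consecutive pairs of a list. -/
noncomputable def pairSum (f : V → V → ℝ≥0∞) : List V → ℝ≥0∞
  | a :: b :: rest => f a b + pairSum f (b :: rest)
  | _ => 0

/-- Weighted length of a walk (given as a list of vertices). -/
noncomputable def wlen (G : WGraph V) (l : List V) : ℝ≥0∞ := pairSum G.w l

/-- `l` is a walk in `G` from `s` to `t`: consecutive vertices are adjacent,
the first vertex is `s` and the last is `t`. -/
def IsWalk (G : WGraph V) (s t : V) (l : List V) : Prop :=
  l.Chain' G.Adj ∧ l.head? = some s ∧ l.getLast? = some t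

/-- Shortest-path distance in `G` (`⊤` if no walk exists). -/
noncomputable def dist (G : WGraph V) (s t : V) : ℝ≥0∞ :=
  sInf {x | ∃ l, IsWalk G s t l ∧ wlen G l = x}

/-- Induced subgraph on a vertex set `S`. -/
def induce (G : WGraph V) (S : Set V) : WGraph V where
  Adj u v := G.Adj u v ∧ u ∈ S ∧ v ∈ S
  symm h := ⟨G.symm h.1, h.2.2, h.2.1⟩
  w := G.w

/-- A partition of the vertex set is given by a function `P : V → ι`
assigning each vertex its partition index. The set of all boundary
vertices: vertices having a neighbor in another partition. -/
def bdry (G : WGraph V) (P : V → ι) : Set V :=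
  {v | ∃ u, G.Adj v u ∧ P u ≠ P v}

/-- Boundary vertices of partition `i`. -/
def bdryIn (G : WGraph V) (P : V → ι) (i : ι) : Set V :=
  {v | P v = i ∧ ∃ u, G.Adj v u ∧ P u ≠ i}

/-- The induced subgraph `G_i` of partition `i`. -/
def partGraph (G : WGraph V) (P : V → ι) (i : ι) : WGraph V :=
  induce G {x | P x = i}

/-- The No-Boundary overlay graph `G̃`: vertices are boundary vertices; for each
partition, each boundary pair gets an edge of weight equal to the *local*
partition distance; inter-partition edges of `G` keep their original weight. -/
noncomputable def overlay (G : WGraph V) (P : V → ι) : WGraph V where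
  Adj u v := (P u = P v ∧ u ∈ bdry G P ∧ v ∈ bdry G P) ∨ (P u ≠ P v ∧ G.Adj u v)
  symm := by
    rintro u v (⟨h1, h2, h3⟩ | ⟨h1, h2⟩)
    · exact Or.inl ⟨h1.symm, h3, h2⟩
    · exact Or.inr ⟨fun h => h1 h.symm, G.symm h2⟩
  w u v := if P u = P v then dist (partGraph G P (P u)) u v else G.w u v

/-- A half-connected boundary vertex: has a non-boundary neighbor in its own partition. -/
def halfC (G : WGraph V) (P : V → ι) (b : V) : Prop :=
  b ∈ bdry G P ∧ ∃ u, G.Adj b u ∧ P u = P b ∧ u ∉ bdry G P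

/-- A full-connected boundary vertex: all in-partition neighbors are boundary vertices. -/
def fullC (G : WGraph V) (P : V → ι) (b : V) : Prop :=
  b ∈ bdry G P ∧ ∀ u, G.Adj b u → P u = P b → u ∈ bdry G P

/-- The pruned overlay graph `G̃'`, with inserted boundary-pair weights `ω`:
edges among half-connected boundary pairs of the same partition (weight `ω`),
all inter-partition edges, and the original in-partition adjacent edges of
full-connected boundary vertices. -/
noncomputable def pruned (G : WGraph V) (P : V → ι) (ω : V → V → ℝ≥0∞) : WGraph V where
  Adj u v :=
    (P u = P v ∧ halfC G P u ∧ halfC G P v) ∨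
    (P u ≠ P v ∧ G.Adj u v) ∨
    (P u = P v ∧ G.Adj u v ∧ u ∈ bdry G P ∧ v ∈ bdry G P ∧ (fullC G P u ∨ fullC G P v))
  symm := by
    rintro u v (⟨h1, h2, h3⟩ | ⟨h1, h2⟩ | ⟨h1, h2, h3, h4, h5⟩)
    · exact Or.inl ⟨h1.symm, h3, h2⟩
    · exact Or.inr (Or.inl ⟨fun h => h1 h.symm, G.symm h2⟩)
    · exact Or.inr (Or.inr ⟨h1.symm, G.symm h2, h4, h3, h5.symm⟩)
  w u v := if P u = P v ∧ halfC G P u ∧ halfC G P v then ω u v else G.w u v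

/-- The augmented partition graph `G'_i`: the induced subgraph `G_i` plus, for each
boundary pair `b₁ b₂ ∈ B_i`, an inserted edge of weight `ω b₁ b₂` (taking the
minimum with an already-existing edge weight). -/
noncomputable def augment (G : WGraph V) (P : V → ι) (i : ι) (ω : V → V → ℝ≥0∞) : WGraph V where
  Adj u v := (G.Adj u v ∧ P u = i ∧ P v = i) ∨ (u ∈ bdryIn G P i ∧ v ∈ bdryIn G P i)
  symm := by
    rintro u v (⟨h1, h2, h3⟩ | ⟨h1, h2⟩)
    · exact Or.inl ⟨G.symm h1, h3, h2⟩
    · exact Or.inr ⟨h2, h1⟩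
  w u v :=
    if u ∈ bdryIn G P i ∧ v ∈ bdryIn G P i then
      (if G.Adj u v ∧ P u = i ∧ P v = i then min (ω u v) (G.w u v) else ω u v)
    else G.w u v

/-- Graph obtained from `G` by adding, for every pair `u v ∈ S`, a shortcut edge
of weight `dist G u v` (taking the minimum with an already-existing edge weight). -/
noncomputable def shortcut (G : WGraph V) (S : Set V) : WGraph V where
  Adj u v := G.Adj u v ∨ (u ∈ S ∧ v ∈ S)
  symm := by
    rintro u v (h | ⟨h1, h2⟩)
    · exact Or.inl (G.symm h)
    · exact Or.inr ⟨h2, h1⟩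
  w u v :=
    if u ∈ S ∧ v ∈ S then
      (if G.Adj u v then min (dist G u v) (G.w u v) else dist G u v)
    else G.w u v

/-- Vertex-splitting construction: each cut vertex `x ∈ X` keeps its neighbors in
group `N x 0`; for `1 ≤ i ≤ l x` a duplicate `(x, i)` is created, connected to the
vertices of `N x i` with the original weights and to `x` by a zero-weight edge. -/
noncomputable def split (G : WGraph V) (X : Set V) (N : V → ℕ → Set V) (l : V → ℕ) :
    WGraph (V ⊕ V × ℕ) where
  Adj a b := match a, b with
    | .inl u, .inl v => G.Adj u v ∧ (u ∈ X → v ∈ N u 0) ∧ (v ∈ X → u ∈ N v 0)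
    | .inl v, .inr (x, i) => x ∈ X ∧ 1 ≤ i ∧ i ≤ l x ∧ ((G.Adj x v ∧ v ∈ N x i) ∨ v = x)
    | .inr (x, i), .inl v => x ∈ X ∧ 1 ≤ i ∧ i ≤ l x ∧ ((G.Adj x v ∧ v ∈ N x i) ∨ v = x)
    | .inr _, .inr _ => False
  symm := by
    rintro (u | ⟨x, i⟩) (v | ⟨y, j⟩) h
    · exact ⟨G.symm h.1, h.2.2, h.2.1⟩
    · exact h
    · exact h
    · exact h.elim
  w a b := match a, b with
    | .inl u, .inl v => G.w u v
    | .inl v, .inr (x, _) => if v = x then 0 else G.w x v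
    | .inr (x, _), .inl v => if v = x then 0 else G.w x v
    | .inr _, .inr _ => 0


section Aux17
variable {V : Type*} {ι : Type*}

lemma pairSum_append (f : V → V → ℝ≥0∞) : ∀ (xs : List V) (y : V) (ys : List V),
    pairSum f (xs ++ y :: ys) = pairSum f (xs ++ [y]) + pairSum f (y :: ys)
  | [], y, ys => by simp [pairSum]
  | [a], y, ys => by simp [pairSum, add_assoc]
  | a :: c :: xs, y, ys => by
      have h := pairSum_append f (c :: xs) y ys
      show f a c + pairSum f ((c :: xs) ++ y :: ys)
        = (f a c + pairSum f ((c :: xs) ++ [y])) + pairSum f (y :: ys)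
      rw [h, add_assoc]

lemma dist_le_wlen {G : WGraph V} {s t : V} {l : List V} (h : IsWalk G s t l) :
    dist G s t ≤ wlen G l := sInf_le ⟨l, h, rfl⟩

lemma isWalk_append {G : WGraph V} {s b t : V} {la lb : List V}
    (ha : IsWalk G s b la) (hb : IsWalk G b t lb) :
    IsWalk G s t (la ++ lb.tail) ∧ wlen G (la ++ lb.tail) = wlen G la + wlen G lb := by
  obtain ⟨ca, hha, hgla⟩ := ha
  obtain ⟨cb, hhb, hglb⟩ := hb
  have hlan : la ≠ [] := by rintro rfl; simp at hha
  obtain ⟨lb', rfl⟩ : ∃ lb', lb = b :: lb' := by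
    cases lb with
    | nil => simp at hhb
    | cons x xs =>
        simp only [List.head?_cons, Option.some.injEq] at hhb
        exact ⟨xs, by rw [hhb]⟩
  obtain ⟨la', rfl⟩ : ∃ la', la = la' ++ [b] := by
    refine ⟨la.dropLast, ?_⟩
    have hlb2 : la.getLast hlan = b := by
      have h2 := List.getLast?_eq_getLast hlan
      rw [hgla] at h2
      exact Option.some.inj h2.symm
    rw [← hlb2, List.dropLast_append_getLast]
  have htail : (b :: lb').tail = lb' := rfl
  obtain ⟨hrel, hchlb'⟩ := List.isChain_cons.mp cb
  have hchain : List.Chain' G.Adj ((la' ++ [b]) ++ lb') := by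
    refine List.isChain_append.mpr ?_
    refine ⟨ca, hchlb', ?_⟩
    intro x hx y hy
    rw [List.getLast?_concat] at hx
    simp only [Option.mem_def, Option.some.injEq] at hx
    subst hx
    exact hrel y hy
  refine ⟨⟨by rwa [htail], ?_, ?_⟩, ?_⟩
  · rw [htail, List.head?_append_of_ne_nil _ (by simp)]
    exact hha
  · rw [htail]
    cases lb' with
    | nil =>
        have hbt : b = t := by simpa [List.getLast?] using hglb
        simp [List.getLast?_concat, hbt]
    | cons c l₂ =>
        rw [List.getLast?_append_cons]
        rw [show b :: c :: l₂ = [b] ++ c :: l₂ from rfl, List.getLast?_append_cons] at hglb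
        exact hglb
  · rw [htail, List.append_assoc, List.singleton_append]
    exact pairSum_append G.w la' b lb'

lemma dist_triangle' (G : WGraph V) (s b t : V) :
    dist G s t ≤ dist G s b + dist G b t := by
  set A := {x | ∃ l, IsWalk G s b l ∧ wlen G l = x} with hA
  set B := {x | ∃ l, IsWalk G b t l ∧ wlen G l = x} with hB
  have key : ∀ a ∈ A, ∀ c ∈ B, dist G s t ≤ a + c := by
    rintro _ ⟨la, hla, rfl⟩ _ ⟨lb, hlb, rfl⟩
    obtain ⟨hw, hl⟩ := isWalk_append hla hlb
    rw [← hl]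
    exact dist_le_wlen hw
  show dist G s t ≤ sInf A + sInf B
  rcases Set.eq_empty_or_nonempty A with hAe | hAn
  · simp [hAe]
  rcases Set.eq_empty_or_nonempty B with hBe | hBn
  · simp [hBe]
  haveI : Nonempty A := hAn.to_subtype
  haveI : Nonempty B := hBn.to_subtype
  rw [sInf_eq_iInf' A, sInf_eq_iInf' B, ENNReal.iInf_add]
  refine le_iInf fun a => ?_
  rw [ENNReal.add_iInf]
  exact le_iInf fun c => key a a.2 c c.2

lemma dist_le_dist_induce (G : WGraph V) (S : Set V) (u v : V) :
    dist G u v ≤ dist (induce G S) u v := by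
  refine sInf_le_sInf ?_
  rintro _ ⟨l, ⟨hc, hh, hg⟩, rfl⟩
  exact ⟨l, ⟨hc.imp fun _ _ h => h.1, hh, hg⟩, rfl⟩

lemma chainPart (G : WGraph V) (P : V → ι) :
    ∀ (m : List V) (c : V), List.Chain' G.Adj (c :: m) →
      (∀ x ∈ m, x ∉ bdry G P) →
      ∀ x ∈ c :: m, P x = P ((c :: m).getLast (by simp))
  | [], c, _, _ => by simp
  | d :: m, c, hch, hnb => by
      have hadj : G.Adj c d := (List.isChain_cons_cons.mp hch).1
      have ih := chainPart G P m d (List.isChain_cons_cons.mp hch).2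
        (fun x hx => hnb x (List.mem_cons_of_mem _ hx))
      have hcd : P c = P d := by
        by_contra h
        exact hnb d List.mem_cons_self ⟨c, G.symm hadj, h⟩
      have hlast : ((c :: d :: m).getLast (by simp)) = ((d :: m).getLast (by simp)) := by
        simp [List.getLast_cons]
      intro x hx
      rcases List.mem_cons.mp hx with rfl | hx
      · rw [hlast, ← ih d List.mem_cons_self]; exact hcd
      · rw [hlast]; exact ih x hx

lemma chain'_induce {G : WGraph V} {S : Set V} :
    ∀ {m : List V}, List.Chain' G.Adj m → (∀ x ∈ m, x ∈ S) → List.Chain' (induce G S).Adj m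
  | [], _, _ => List.isChain_nil
  | [_], _, _ => List.isChain_singleton _
  | a :: c :: m, hch, hmem => by
      replace hch := List.isChain_cons_cons.mp hch; refine List.isChain_cons_cons.mpr ?_
      exact ⟨⟨hch.1, hmem a (by simp), hmem c (by simp)⟩,
        chain'_induce hch.2 (fun x hx => hmem x (List.mem_cons_of_mem _ hx))⟩

end Aux17

/-- cross-partition, boundary source to inner target: the last
boundary vertex `b` of the shortest path belongs to `B_j`, the tail stays in `G_j`,
and `d_G(s,t) = d_G(s,b) + d_{G_j}(b,t)`. -/
theorem stmt17 {V ι : Type*} (G : WGraph V) (P : V → ι) (i j : ι) (hij : i ≠ j)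
    (s t : V) (hs : s ∈ bdryIn G P i) (ht : P t = j) (htb : t ∉ bdry G P)
    (l l1 l2 : List V) (b : V)
    (hwalk : IsWalk G s t l) (hsp : wlen G l = dist G s t)
    (hdec : l = l1 ++ b :: l2) (hb : b ∈ bdry G P)
    (hlast : ∀ x ∈ l2, x ∉ bdry G P) :
    b ∈ bdryIn G P j ∧ (∀ x ∈ b :: l2, P x = j) ∧
    dist G s t = dist G s b + dist (partGraph G P j) b t := by
  obtain ⟨hch, hhd, hgl⟩ := hwalk
  subst hdec
  -- the two halves are walks
  have hch2 : List.Chain' G.Adj (b :: l2) := (List.isChain_append.mp hch).2.1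
  have hgl2 : (b :: l2).getLast? = some t := by
    rwa [List.getLast?_append_cons] at hgl
  have hwalk2 : IsWalk G b t (b :: l2) := ⟨hch2, rfl, hgl2⟩
  have hsplit : l1 ++ b :: l2 = (l1 ++ [b]) ++ l2 := by simp
  have hch1 : List.Chain' G.Adj (l1 ++ [b]) := by
    rw [hsplit] at hch
    exact (List.isChain_append.mp hch).1
  have hhd1 : (l1 ++ [b]).head? = some s := by
    rw [hsplit, List.head?_append_of_ne_nil _ (by simp)] at hhd
    exact hhd
  have hwalk1 : IsWalk G s b (l1 ++ [b]) := ⟨hch1, hhd1, List.getLast?_concat⟩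
  -- t is the last vertex of b :: l2
  have hlt : (b :: l2).getLast (by simp) = t := by
    have := List.getLast?_eq_getLast (l := b :: l2) (by simp)
    rw [hgl2] at this
    exact (Option.some.injEq _ _ ▸ this.symm)
  -- all vertices of b :: l2 lie in partition j
  have hall : ∀ x ∈ b :: l2, P x = j := by
    intro x hx
    have := chainPart G P l2 b hch2 hlast x hx
    rwa [hlt, ht] at this
  have hbj : P b = j := hall b List.mem_cons_self
  have hbIn : b ∈ bdryIn G P j := by
    obtain ⟨u, hu, hne⟩ := hb
    exact ⟨hbj, u, hu, by rwa [hbj] at hne⟩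
  refine ⟨hbIn, hall, ?_⟩
  -- walk b :: l2 is a walk inside the partition graph
  have hwalk2j : IsWalk (partGraph G P j) b t (b :: l2) :=
    ⟨chain'_induce hch2 (fun x hx => hall x hx), rfl, hgl2⟩
  have hwlenEq : wlen (partGraph G P j) (b :: l2) = wlen G (b :: l2) := rfl
  apply le_antisymm
  · calc dist G s t ≤ dist G s b + dist G b t := dist_triangle' G s b t
      _ ≤ dist G s b + dist (partGraph G P j) b t :=
          add_le_add le_rfl (dist_le_dist_induce G _ b t)
  · rw [← hsp]
    have : wlen G (l1 ++ b :: l2) = wlen G (l1 ++ [b]) + wlen G (b :: l2) :=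
      pairSum_append G.w l1 b l2
    rw [this]
    exact add_le_add (dist_le_wlen hwalk1) (hwlenEq ▸ dist_le_wlen hwalk2j)

end PSP
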